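/- In a pre-abelian category equipped with an exact structure, suppose that for any two admissible monomorphisms c : B ↣ D and d : C ↣ D, the two projections from the pullback of c and d are again admissible monomorphisms (the admissible intersection property). Then every kernel-cokernel pair in the category belongs to the exact structure. -/

import Mathlib

open CategoryTheory CategoryTheory.Limits ZeroObject

universe v u

variable (C : Type u) [Category.{v} C] [Preadditive C]

/-- A Quillen exact structure on an additive category: a class `E` of kernel-cokernel pairs,
closed under isomorphisms, containing the identities as admissible monomorphisms and
epimorphisms, with admissible monomorphisms and epimorphisms closed under composition, and
with admissible monomorphisms (resp. epimorphisms) stable under pushout (resp. pullback). -/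
structure ExactStructure where
  /-- the class of exact (kernel-cokernel) pairs -/
  E : ∀ ⦃X Y Z : C⦄, (X ⟶ Y) → (Y ⟶ Z) → Prop
  kernel_cokernel : ∀ ⦃X Y Z : C⦄ (f : X ⟶ Y) (g : Y ⟶ Z), E f g →
    ∃ w : f ≫ g = 0, Nonempty (IsLimit (KernelFork.ofι f w)) ∧
      Nonempty (IsColimit (CokernelCofork.ofπ g w))
  iso_closed : ∀ ⦃X Y Z X' Y' Z' : C⦄ (f : X ⟶ Y) (g : Y ⟶ Z) (f' : X' ⟶ Y') (g' : Y' ⟶ Z')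
    (eX : X ≅ X') (eY : Y ≅ Y') (eZ : Z ≅ Z'),
    f ≫ eY.hom = eX.hom ≫ f' → g ≫ eZ.hom = eY.hom ≫ g' → E f g → E f' g'
  id_admMono : ∀ X : C, ∃ (Z : C) (g : X ⟶ Z), E (𝟙 X) g
  id_admEpi : ∀ X : C, ∃ (W : C) (f : W ⟶ X), E f (𝟙 X)
  admMono_comp : ∀ ⦃X Y Z : C⦄ (f : X ⟶ Y) (f' : Y ⟶ Z),
    (∃ (W : C) (g : Y ⟶ W), E f g) → (∃ (W : C) (g : Z ⟶ W), E f' g) →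
    ∃ (W : C) (g : Z ⟶ W), E (f ≫ f') g
  admEpi_comp : ∀ ⦃X Y Z : C⦄ (g : X ⟶ Y) (g' : Y ⟶ Z),
    (∃ (W : C) (f : W ⟶ X), E f g) → (∃ (W : C) (f : W ⟶ Y), E f g') →
    ∃ (W : C) (f : W ⟶ X), E f (g ≫ g')
  pushout_admMono : ∀ ⦃X Y : C⦄ (f : X ⟶ Y), (∃ (W : C) (g : Y ⟶ W), E f g) →
    ∀ ⦃Z : C⦄ (h : X ⟶ Z), ∃ (P : C) (inl : Y ⟶ P) (inr : Z ⟶ P),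
      IsPushout f h inl inr ∧ ∃ (W : C) (g : P ⟶ W), E inr g
  pullback_admEpi : ∀ ⦃X Y : C⦄ (g : X ⟶ Y), (∃ (W : C) (f : W ⟶ X), E f g) →
    ∀ ⦃Z : C⦄ (h : Z ⟶ Y), ∃ (P : C) (fst : P ⟶ X) (snd : P ⟶ Z),
      IsPullback fst snd g h ∧ ∃ (W : C) (f : W ⟶ P), E f snd

variable {C}

/-- A morphism is an admissible monomorphism for an exact structure if it occurs as the
first map of an exact pair. -/
def ExactStructure.AdmMono (S : ExactStructure C) {X Y : C} (f : X ⟶ Y) : Prop :=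
  ∃ (W : C) (g : Y ⟶ W), S.E f g

/-- Transport of admissible monomorphisms along an isomorphism on the target. -/
theorem ExactStructure.AdmMono.comp_iso (S : ExactStructure C) {X Y Y' : C} {f : X ⟶ Y}
    (hf : S.AdmMono f) (e : Y ≅ Y') : S.AdmMono (f ≫ e.hom) := by
  obtain ⟨W, g, hE⟩ := hf
  exact ⟨W, e.inv ≫ g, S.iso_closed f g (f ≫ e.hom) (e.inv ≫ g)
    (Iso.refl X) e (Iso.refl W) (by simp) (by simp) hE⟩

/-- The zero morphism out of the zero object is an admissible monomorphism. -/
theorem ExactStructure.admMono_zero_from_zero (S : ExactStructure C) [HasZeroObject C]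
    (Z : C) : S.AdmMono (0 : (0 : C) ⟶ Z) := by
  obtain ⟨W, f0, hE⟩ := S.id_admEpi Z
  obtain ⟨w, ⟨hlim⟩, -⟩ := S.kernel_cokernel f0 (𝟙 Z) hE
  have hf0 : f0 = 0 := by simpa using w
  have hmono : Mono f0 := mono_of_isLimit_fork hlim
  have hW : IsZero W := by
    rw [IsZero.iff_id_eq_zero]
    rw [← cancel_mono f0, hf0]
    simp
  exact ⟨Z, 𝟙 Z, S.iso_closed f0 (𝟙 Z) 0 (𝟙 Z)
    (hW.isoZero.symm).symm (Iso.refl Z) (Iso.refl Z)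
    (by simp [hf0]) (by simp) hE⟩

/-- `biprod.inl` is an admissible monomorphism. -/
theorem ExactStructure.admMono_biprod_inl (S : ExactStructure C) [HasZeroObject C]
    [HasBinaryBiproducts C] (Y Z : C) : S.AdmMono (biprod.inl : Y ⟶ Y ⊞ Z) := by
  obtain ⟨P, inl, inr, hpo, hadm⟩ :=
    S.pushout_admMono (0 : (0 : C) ⟶ Z) (S.admMono_zero_from_zero Z) (0 : (0 : C) ⟶ Y)
  -- build an iso `P ≅ Y ⊞ Z` sending `inr` to `biprod.inl`
  have hw : (0 : (0 : C) ⟶ Z) ≫ (biprod.inr : Z ⟶ Y ⊞ Z) =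
      (0 : (0 : C) ⟶ Y) ≫ (biprod.inl : Y ⟶ Y ⊞ Z) := by simp
  let e : P ≅ Y ⊞ Z :=
    { hom := hpo.desc biprod.inr biprod.inl hw
      inv := biprod.desc inr inl
      hom_inv_id := by
        apply hpo.hom_ext
        · simp [hpo.inl_desc]
        · simp [hpo.inr_desc]
      inv_hom_id := by
        apply biprod.hom_ext' <;> simp [hpo.inl_desc, hpo.inr_desc] }
  have : (biprod.inl : Y ⟶ Y ⊞ Z) = inr ≫ e.hom := (hpo.inr_desc _ _ _).symm
  rw [this]
  exact ExactStructure.AdmMono.comp_iso S hadm e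

/-- If an exact structure on a pre-abelian category has the admissible intersection property,
then every kernel-cokernel pair belongs to the exact structure. -/
theorem stmt12 [HasFiniteBiproducts C] [HasKernels C] [HasCokernels C]
    (S : ExactStructure C)
    (hAI : ∀ ⦃A B C' D : C⦄ (a : A ⟶ B) (b : A ⟶ C') (c : B ⟶ D) (d : C' ⟶ D),
      S.AdmMono c → S.AdmMono d → IsPullback a b c d → S.AdmMono a ∧ S.AdmMono b) :
    ∀ ⦃X Y Z : C⦄ (f : X ⟶ Y) (g : Y ⟶ Z) (w : f ≫ g = 0),
      IsLimit (KernelFork.ofι f w) → IsColimit (CokernelCofork.ofπ g w) → S.E f g := by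
  intro X Y Z f g w hker hcoker
  haveI : HasBinaryBiproducts C := hasBinaryBiproducts_of_finite_biproducts C
  -- the two admissible monos into `Y ⊞ Z`
  have hd : S.AdmMono (biprod.inl : Y ⟶ Y ⊞ Z) := S.admMono_biprod_inl Y Z
  -- the automorphism of `Y ⊞ Z` twisting by `g`
  let φ : (Y ⊞ Z : C) ≅ Y ⊞ Z :=
    { hom := 𝟙 _ + biprod.fst ≫ g ≫ biprod.inr
      inv := 𝟙 _ - biprod.fst ≫ g ≫ biprod.inr
      hom_inv_id := by
        simp only [Preadditive.comp_sub, Preadditive.add_comp, Category.comp_id,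
          Category.id_comp, Category.assoc, biprod.inr_fst_assoc, zero_comp, comp_zero]
        abel
      inv_hom_id := by
        simp only [Preadditive.comp_add, Preadditive.sub_comp, Category.comp_id,
          Category.id_comp, Category.assoc, biprod.inr_fst_assoc, zero_comp, comp_zero]
        abel }
  have hc' : (biprod.inl : Y ⟶ Y ⊞ Z) ≫ φ.hom = biprod.lift (𝟙 Y) g := by
    simp [φ, Preadditive.comp_add]
    ext <;> simp
  have hc : S.AdmMono (biprod.lift (𝟙 Y) g) := by
    rw [← hc']
    exact ExactStructure.AdmMono.comp_iso S hd φ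
  -- `f, f` is a pullback of these
  have hcomm : f ≫ biprod.lift (𝟙 Y) g = f ≫ (biprod.inl : Y ⟶ Y ⊞ Z) := by
    ext <;> simp [w]
  have hpb : IsPullback f f (biprod.lift (𝟙 Y) g) (biprod.inl : Y ⟶ Y ⊞ Z) := by
    refine IsPullback.of_isLimit' ⟨hcomm⟩ ?_
    refine PullbackCone.IsLimit.mk _ (fun s => ?_) (fun s => ?_) (fun s => ?_) (fun s m hm₁ hm₂ => ?_)
    · -- lift : s.pt ⟶ X, using that f is the kernel of g
      refine KernelFork.IsLimit.lift' hker s.fst ?_ |>.1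
      have h1 := s.condition
      have h2 : s.fst ≫ (biprod.lift (𝟙 Y) g) ≫ biprod.snd =
          s.snd ≫ (biprod.inl : Y ⟶ Y ⊞ Z) ≫ biprod.snd := by
        rw [← Category.assoc, ← Category.assoc, h1]
      simpa using h2
    · exact (KernelFork.IsLimit.lift' hker s.fst _).2
    · -- snd factorization: s.snd = s.fst since first components agree
      have h2 : s.fst ≫ (biprod.lift (𝟙 Y) g) ≫ biprod.fst =
          s.snd ≫ (biprod.inl : Y ⟶ Y ⊞ Z) ≫ biprod.fst := by
        rw [← Category.assoc, ← Category.assoc, s.condition]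
      have hfs : s.fst = s.snd := by simpa using h2
      refine Eq.trans ?_ hfs
      exact (KernelFork.IsLimit.lift' hker s.fst _).2
    · -- uniqueness: f is a mono (it's a kernel)
      have : Mono f := mono_of_isLimit_fork hker
      rw [← cancel_mono f, hm₁]
      exact ((KernelFork.IsLimit.lift' hker s.fst _).2).symm
  obtain ⟨ha, -⟩ := hAI f f (biprod.lift (𝟙 Y) g) biprod.inl hc hd hpb
  obtain ⟨W, g', hE⟩ := ha
  -- g' and g are both cokernels of f, hence isomorphic
  obtain ⟨w', -, ⟨hcolim⟩⟩ := S.kernel_cokernel f g' hE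
  let e : W ≅ Z := hcolim.coconePointUniqueUpToIso hcoker
  have he : g' ≫ e.hom = g := by
    have := hcolim.comp_coconePointUniqueUpToIso_hom hcoker WalkingParallelPair.one
    simpa [e] using this
  exact S.iso_closed f g' f g (Iso.refl X) (Iso.refl Y) e (by simp) (by simp [he]) hE
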